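/- (q-contagious normalization / new q-binomial theorem) For all n ≥ 0 and parameters m, u, s: ∑_{κ=0}^{n} [n choose κ]_{q^{-s}} q^{(m+sκ)(n-κ)} ∏_{α=0}^{κ-1}[m+αs]_q ∏_{β=0}^{n-κ-1}[u+βs]_q = ∏_{γ=0}^{n-1}[m+u+γs]_q. -/
import Mathlib


open Real

/-- The `q`-analog `[x]_q = (q^x - 1)/(q - 1)` of a real number `x` (`q > 0`). -/
noncomputable def qNumR (q x : ℝ) : ℝ := (q ^ x - 1) / (q - 1)

/-- The Gaussian (`q`-)binomial coefficient in an arbitrary base, via the Pascal recursion. -/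
def qBinom {R : Type*} [CommRing R] (q : R) : ℕ → ℕ → R
  | _, 0 => 1
  | 0, _ + 1 => 0
  | n + 1, k + 1 => qBinom q n k + q ^ (k + 1) * qBinom q n (k + 1)

lemma qBinom_zero_right {R : Type*} [CommRing R] (q : R) (n : ℕ) : qBinom q n 0 = 1 := by
  cases n <;> rfl

lemma qBinom_eq_zero {R : Type*} [CommRing R] (q : R) :
    ∀ n k : ℕ, n < k → qBinom q n k = 0 := by
  intro n
  induction n with
  | zero =>
    intro k h
    obtain ⟨k, rfl⟩ := Nat.exists_eq_add_of_lt h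
    simp [qBinom]
  | succ n ih =>
    intro k h
    obtain ⟨j, rfl⟩ : ∃ j, k = j + 1 := ⟨k - 1, by omega⟩
    simp [qBinom, ih j (by omega), ih (j+1) (by omega)]

lemma qBinom_one {R : Type*} [CommRing R] (q : R) :
    ∀ n : ℕ, qBinom q n 1 = ∑ i ∈ Finset.range n, q ^ i := by
  intro n
  induction n with
  | zero => simp [qBinom]
  | succ n ih =>
    show qBinom q n 0 + q ^ (0+1) * qBinom q n (0+1) = _
    rw [qBinom_zero_right, ih, Finset.sum_range_succ' _ n]
    simp only [Finset.mul_sum, pow_succ, pow_zero]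
    rw [add_comm]
    congr 1
    exact Finset.sum_congr rfl fun i _ => by ring

lemma qBinom_pascal' {R : Type*} [CommRing R] (q : R) :
    ∀ n k : ℕ, k ≤ n →
      qBinom q (n+1) (k+1) = q ^ (n - k) * qBinom q n k + qBinom q n (k+1) := by
  intro n
  induction n with
  | zero =>
    intro k hk
    interval_cases k
    simp [qBinom]
  | succ n ih =>
    intro k hk
    match k with
    | 0 =>
      show qBinom q (n+1) 0 + q ^ (0+1) * qBinom q (n+1) (0+1) = _
      rw [qBinom_zero_right, qBinom_one]
      have key : ∀ N : ℕ, q * (∑ i ∈ Finset.range N, q ^ i) + 1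
          = q ^ N + ∑ i ∈ Finset.range N, q ^ i := by
        intro N
        induction N with
        | zero => simp
        | succ N ihN =>
          rw [Finset.sum_range_succ]
          linear_combination ihN
      simp only [Nat.sub_zero]
      linear_combination key (n+1)
    | k + 1 =>
      rcases Nat.lt_or_ge (k+1) (n+1) with hlt | hge
      · have hk1 : k + 1 ≤ n := by omega
        have hk0 : k ≤ n := by omega
        obtain ⟨d, hd⟩ : ∃ d, n - (k+1) = d := ⟨_, rfl⟩
        have h1 : n - k = d + 1 := by omega
        have h2 : n + 1 - (k + 1) = d + 1 := by omega
        have e1 : qBinom q (n+1+1) (k+1+1)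
            = qBinom q (n+1) (k+1) + q^(k+1+1) * qBinom q (n+1) (k+1+1) := rfl
        have e2 : qBinom q (n+1) (k+1) = qBinom q n k + q^(k+1) * qBinom q n (k+1) := rfl
        have e3 : qBinom q (n+1) (k+1+1)
            = qBinom q n (k+1) + q^(k+1+1) * qBinom q n (k+1+1) := rfl
        rw [e1]
        conv_rhs => rw [e2, e3]
        rw [ih k hk0, ih (k+1) hk1, hd, h1, h2]
        ring
      · have hk2 : k = n := by omega
        subst hk2
        show qBinom q (k+1) (k+1) + q ^ (k+1+1) * qBinom q (k+1) (k+1+1) = _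
        rw [qBinom_eq_zero q (k+1) (k+1+1) (by omega), Nat.sub_self]
        ring

lemma qNumR_add {q : ℝ} (hq0 : 0 < q) (hq1 : q ≠ 1) (a b : ℝ) :
    qNumR q a + q ^ a * qNumR q b = qNumR q (a + b) := by
  have h1 : q - 1 ≠ 0 := sub_ne_zero.mpr hq1
  unfold qNumR
  rw [rpow_add hq0]
  field_simp
  ring

/-- summand of the main identity -/
noncomputable def auxT (q m u s : ℝ) (n κ : ℕ) : ℝ :=
  qBinom (q ^ (-s)) n κ * q ^ ((m + s * κ) * ((n : ℝ) - κ)) *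
    (∏ α ∈ Finset.range κ, qNumR q (m + α * s)) *
    (∏ β ∈ Finset.range (n - κ), qNumR q (u + β * s))

/-- hybrid summand appearing in the induction step -/
noncomputable def auxH (q m u s : ℝ) (n i : ℕ) : ℝ :=
  qBinom (q ^ (-s)) n i * q ^ ((m + s * i) * (((n + 1 : ℕ) : ℝ) - i)) *
    (∏ α ∈ Finset.range i, qNumR q (m + α * s)) *
    (∏ β ∈ Finset.range (n + 1 - i), qNumR q (u + β * s))

lemma hQpow {q : ℝ} (hq0 : 0 < q) (s : ℝ) (t : ℕ) :
    (q ^ (-s) : ℝ) ^ t = q ^ (-s * (t : ℝ)) := by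
  rw [← Real.rpow_natCast (q ^ (-s)) t, ← Real.rpow_mul hq0.le]

lemma step1 (q m u s : ℝ) (hq0 : 0 < q) (n j : ℕ) (hj : j ≤ n) :
    auxT q m u s (n+1) (j+1)
      = auxT q m u s n j * qNumR q (m + (j : ℝ) * s) + auxH q m u s n (j+1) := by
  unfold auxT auxH
  rw [qBinom_pascal' _ n j hj, hQpow hq0, Nat.cast_sub hj,
    Finset.prod_range_succ (fun α => qNumR q (m + α * s)) j,
    Nat.succ_sub_succ n j]
  have hqe : q ^ (-s * ((n : ℝ) - (j : ℕ))) * q ^ ((m + s * ((j:ℕ)+1 : ℕ)) * (((n+1 : ℕ) : ℝ) - ((j:ℕ)+1 : ℕ)))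
      = q ^ ((m + s * (j:ℕ)) * ((n : ℝ) - (j:ℕ))) := by
    rw [← Real.rpow_add hq0]
    congr 1
    push_cast
    ring
  linear_combination (qBinom (q ^ (-s)) n j *
    (∏ α ∈ Finset.range j, qNumR q (m + α * s)) * qNumR q (m + (j:ℝ) * s) *
    (∏ β ∈ Finset.range (n - j), qNumR q (u + β * s))) * hqe

lemma step0 (q m u s : ℝ) (n : ℕ) :
    auxT q m u s (n+1) 0 = auxH q m u s n 0 := by
  unfold auxT auxH
  rw [qBinom_zero_right, qBinom_zero_right]

lemma hHtop (q m u s : ℝ) (n : ℕ) : auxH q m u s n (n+1) = 0 := by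
  unfold auxH
  rw [qBinom_eq_zero _ n (n+1) (by omega)]
  ring

lemma stepH (q m u s : ℝ) (hq0 : 0 < q) (n i : ℕ) (hi : i ≤ n) :
    auxH q m u s n i
      = auxT q m u s n i * (q ^ (m + (i : ℝ) * s) * qNumR q (u + ((n : ℝ) - i) * s)) := by
  unfold auxT auxH
  have h1 : n + 1 - i = (n - i) + 1 := by omega
  rw [h1, Finset.prod_range_succ (fun β => qNumR q (u + β * s)) (n - i),
    Nat.cast_sub hi]
  have hqe : q ^ ((m + s * i) * (((n+1 : ℕ) : ℝ) - i))
      = q ^ ((m + s * i) * ((n : ℝ) - i)) * q ^ (m + (i:ℝ) * s) := by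
    rw [← Real.rpow_add hq0]
    congr 1
    push_cast
    ring
  rw [hqe]
  ring

/-- q-contagious normalization (6.3), a new q-analog of Newton's binomial:
`∑_{κ=0}^n [n choose κ]_{q^{-s}} q^{(m+sκ)(n-κ)} ∏_{α<κ}[m+αs] ∏_{β<n-κ}[u+βs]
  = ∏_{γ<n}[m+u+γs]`. -/
theorem qContagious_normalization (q m u s : ℝ) (hq0 : 0 < q) (hq1 : q ≠ 1) (n : ℕ) :
    ∑ κ ∈ Finset.range (n + 1),
        qBinom (q ^ (-s)) n κ * q ^ ((m + s * κ) * ((n : ℝ) - κ)) *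
          (∏ α ∈ Finset.range κ, qNumR q (m + α * s)) *
          (∏ β ∈ Finset.range (n - κ), qNumR q (u + β * s)) =
      ∏ γ ∈ Finset.range n, qNumR q (m + u + γ * s) := by
  induction n with
  | zero =>
    rw [Finset.sum_range_one, Finset.prod_range_zero]
    norm_num [qBinom]
  | succ n ih =>
    show ∑ κ ∈ Finset.range (n+1+1), auxT q m u s (n+1) κ = _
    have ih' : ∑ κ ∈ Finset.range (n+1), auxT q m u s n κ
        = ∏ γ ∈ Finset.range n, qNumR q (m + u + γ * s) := ih
    rw [Finset.sum_range_succ' (auxT q m u s (n+1)) (n+1)]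
    have h1 : ∀ j ∈ Finset.range (n+1),
        auxT q m u s (n+1) (j+1)
          = auxT q m u s n j * qNumR q (m + (j : ℝ) * s) + auxH q m u s n (j+1) :=
      fun j hj => step1 q m u s hq0 n j (Finset.mem_range_succ_iff.mp hj)
    rw [Finset.sum_congr rfl h1, Finset.sum_add_distrib, step0, add_assoc,
      ← Finset.sum_range_succ' (auxH q m u s n) (n+1),
      Finset.sum_range_succ (auxH q m u s n) (n+1), hHtop, add_zero]
    have h2 : ∀ i ∈ Finset.range (n+1),
        auxH q m u s n i
          = auxT q m u s n i * (q ^ (m + (i : ℝ) * s) * qNumR q (u + ((n : ℝ) - i) * s)) :=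
      fun i hi => stepH q m u s hq0 n i (Finset.mem_range_succ_iff.mp hi)
    rw [Finset.sum_congr rfl h2, ← Finset.sum_add_distrib]
    have h3 : ∀ j ∈ Finset.range (n+1),
        auxT q m u s n j * qNumR q (m + (j : ℝ) * s)
          + auxT q m u s n j * (q ^ (m + (j : ℝ) * s) * qNumR q (u + ((n : ℝ) - j) * s))
          = auxT q m u s n j * qNumR q (m + u + (n : ℝ) * s) := by
      intro j hj
      have hk := qNumR_add hq0 hq1 (m + (j : ℝ) * s) (u + ((n : ℝ) - j) * s)
      have he : (m + (j : ℝ) * s) + (u + ((n : ℝ) - j) * s) = m + u + (n : ℝ) * s := by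
        ring
      rw [he] at hk
      linear_combination auxT q m u s n j * hk
    rw [Finset.sum_congr rfl h3, ← Finset.sum_mul, ih', Finset.prod_range_succ]
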